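/- Consider the Markov chain (Λ̃_k)_{k≥0} on the nonnegative integers with Λ̃_0 = N and Λ̃_{k+1} | Λ̃_k = λ distributed as Poisson(λ). Then Pr(Λ̃_k = 0) = exp(-N g_k), where g_1 = 1 and g_{j+1} = 1 - exp(-g_j). -/

import Mathlib

/-- Iterate of `s ↦ exp (s - 1)`, composed on the inside. -/
noncomputable def fiterPoisson : ℕ → ℝ → ℝ
  | 0, s => s
  | (k + 1), s => fiterPoisson k (Real.exp (s - 1))

lemma fiterPoisson_succ' (k : ℕ) (s : ℝ) :
    fiterPoisson (k + 1) s = Real.exp (fiterPoisson k s - 1) := by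
  induction k generalizing s with
  | zero => rfl
  | succ k ih => simpa [fiterPoisson] using ih (Real.exp (s - 1))

lemma exp_series_tsum (x : ℝ) : ∑' j : ℕ, x ^ j / (j.factorial : ℝ) = Real.exp x := by
  rw [Real.exp_eq_exp_ℝ, NormedSpace.exp_eq_tsum_div]

/-- The key computation: `∑_j e^{-l} l^j / j! * s^j = (e^{s-1})^l`. -/
lemma poisson_pgf (l : ℕ) (s : ℝ) :
    ∑' j : ℕ, Real.exp (-(l : ℝ)) * (l : ℝ) ^ j / (j.factorial : ℝ) * s ^ j
      = Real.exp (s - 1) ^ l := by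
  have h1 : ∀ j : ℕ, Real.exp (-(l : ℝ)) * (l : ℝ) ^ j / (j.factorial : ℝ) * s ^ j
      = Real.exp (-(l : ℝ)) * (((l : ℝ) * s) ^ j / (j.factorial : ℝ)) := by
    intro j; rw [mul_pow]; ring
  rw [tsum_congr h1, tsum_mul_left, exp_series_tsum, ← Real.exp_add]
  rw [← Real.exp_nat_mul]
  ring_nf

lemma poisson_summable (l : ℕ) (s : ℝ) :
    Summable (fun j : ℕ => Real.exp (-(l : ℝ)) * (l : ℝ) ^ j / (j.factorial : ℝ) * s ^ j) := by
  have h1 : ∀ j : ℕ, Real.exp (-(l : ℝ)) * (l : ℝ) ^ j / (j.factorial : ℝ) * s ^ j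
      = Real.exp (-(l : ℝ)) * (((l : ℝ) * s) ^ j / (j.factorial : ℝ)) := by
    intro j; rw [mul_pow]; ring
  simp only [h1]
  exact (Real.summable_pow_div_factorial _).mul_left _

/-- The Poisson recursive training chain: `p k l` is the probability that the chain
is in state `l` at time `k`, started at the nonnegative integer `N`, with
transition kernel `Poisson(l)` from state `l`. -/
theorem poisson_chain_absorption (N : ℕ) (g : ℕ → ℝ) (hg1 : g 1 = 1)
    (hgrec : ∀ k ≥ 1, g (k + 1) = 1 - Real.exp (-(g k)))
    (p : ℕ → ℕ → ℝ)
    (h0 : ∀ j, p 0 j = if j = N then 1 else 0)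
    (hstep : ∀ k j, p (k + 1) j =
      ∑' l : ℕ, p k l * (Real.exp (-(l : ℝ)) * (l : ℝ) ^ j / (Nat.factorial j))) :
    ∀ k : ℕ, 1 ≤ k → p k 0 = Real.exp (-(N : ℝ) * g k) := by
  -- nonnegativity of p
  have hpos : ∀ k l, 0 ≤ p k l := by
    intro k
    induction k with
    | zero => intro l; rw [h0]; positivity
    | succ k ih =>
      intro j
      rw [hstep]
      refine tsum_nonneg fun l => mul_nonneg (ih l) ?_
      positivity
  -- main induction: generating function
  have key : ∀ k : ℕ, ∀ s : ℝ, 0 ≤ s → s ≤ 1 →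
      Summable (fun l : ℕ => p k l * s ^ l) ∧
      ∑' l : ℕ, p k l * s ^ l = (fiterPoisson k s) ^ N := by
    intro k
    induction k with
    | zero =>
      intro s _ _
      have heq : (fun l : ℕ => p 0 l * s ^ l) = fun l : ℕ => if l = N then s ^ N else 0 := by
        funext l
        rw [h0]
        by_cases h : l = N <;> simp [h]
      rw [heq]
      exact ⟨(hasSum_ite_eq N (s ^ N)).summable, (hasSum_ite_eq N (s ^ N)).tsum_eq⟩
    | succ k ih =>
      intro s hs0 hs1
      set t : ℝ := Real.exp (s - 1) with ht
      have ht0 : 0 ≤ t := (Real.exp_pos _).le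
      have ht1 : t ≤ 1 := by
        exact Real.exp_le_one_iff.mpr (by linarith)
      obtain ⟨ihS, ihT⟩ := ih t ht0 ht1
      -- the double-indexed family, j first then l
      set F : ℕ × ℕ → ℝ := fun q =>
        p k q.2 * (Real.exp (-(q.2 : ℝ)) * (q.2 : ℝ) ^ q.1 / (q.1.factorial : ℝ)) * s ^ q.1
        with hF
      have hFnn : 0 ≤ F := by
        intro q
        refine mul_nonneg (mul_nonneg (hpos _ _) ?_) (pow_nonneg hs0 _)
        positivity
      -- swapped family: l first then j
      have hswap_slice : ∀ l : ℕ, Summable fun j : ℕ => F (j, l) := by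
        intro l
        have : (fun j : ℕ => F (j, l)) = fun j =>
            p k l * (Real.exp (-(l : ℝ)) * (l : ℝ) ^ j / (j.factorial : ℝ) * s ^ j) := by
          funext j; simp only [hF]; ring
        rw [this]
        exact (poisson_summable l s).mul_left _
      have hswap_tsum : ∀ l : ℕ, ∑' j : ℕ, F (j, l) = p k l * t ^ l := by
        intro l
        have : (fun j : ℕ => F (j, l)) = fun j =>
            p k l * (Real.exp (-(l : ℝ)) * (l : ℝ) ^ j / (j.factorial : ℝ) * s ^ j) := by
          funext j; simp only [hF]; ring
        rw [this, tsum_mul_left, poisson_pgf]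
      -- summability of the swapped uncurried family
      have hGnn : 0 ≤ fun q : ℕ × ℕ => F (q.2, q.1) := fun q => hFnn (q.2, q.1)
      have hG : Summable fun q : ℕ × ℕ => F (q.2, q.1) := by
        rw [summable_prod_of_nonneg hGnn]
        constructor
        · intro l; exact hswap_slice l
        · simp only [hswap_tsum]; exact ihS
      have hFsum : Summable F := by
        have := hG.comp_injective (Equiv.prodComm ℕ ℕ).injective
        exact this
      -- summability of slices in the original order, from nonneg criterion
      have hFprod := (summable_prod_of_nonneg hFnn).mp hFsum
      -- now compute
      have hpsj : ∀ j : ℕ, p (k + 1) j * s ^ j = ∑' l : ℕ, F (j, l) := by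
        intro j
        rw [hstep, ← tsum_mul_right]
      have main : ∑' l : ℕ, p (k + 1) l * s ^ l = ∑' l : ℕ, p k l * t ^ l := by
        calc ∑' j : ℕ, p (k + 1) j * s ^ j
            = ∑' j : ℕ, ∑' l : ℕ, F (j, l) := tsum_congr hpsj
          _ = ∑' q : ℕ × ℕ, F q := (Summable.tsum_prod' hFsum hFprod.1).symm
          _ = ∑' q : ℕ × ℕ, F (q.2, q.1) := by
              rw [← (Equiv.prodComm ℕ ℕ).tsum_eq (fun q : ℕ × ℕ => F (q.2, q.1))]
              rfl
          _ = ∑' l : ℕ, ∑' j : ℕ, F (j, l) := Summable.tsum_prod' hG hswap_slice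
          _ = ∑' l : ℕ, p k l * t ^ l := tsum_congr hswap_tsum
      have hsummable : Summable fun l : ℕ => p (k + 1) l * s ^ l := by
        have : (fun j : ℕ => p (k + 1) j * s ^ j) = fun j : ℕ => ∑' l : ℕ, F (j, l) := by
          funext j; exact hpsj j
        rw [this]
        exact hFprod.2
      refine ⟨hsummable, ?_⟩
      rw [main, ihT]
      rfl
  -- fiterPoisson k 0 = exp (-(g k)) for k ≥ 1
  have hfiter : ∀ k : ℕ, 1 ≤ k → fiterPoisson k 0 = Real.exp (-(g k)) := by
    intro k hk
    induction k with
    | zero => omega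
    | succ k ih =>
      rcases Nat.eq_or_lt_of_le hk with h | h
      · have : k = 0 := by omega
        subst this
        simp [fiterPoisson, hg1]
      · have hk1 : 1 ≤ k := by omega
        rw [fiterPoisson_succ', ih hk1, hgrec k hk1]
        congr 1
        ring
  -- conclude
  intro k hk
  obtain ⟨_, hT⟩ := key k 0 le_rfl zero_le_one
  have hval : ∑' l : ℕ, p k l * (0 : ℝ) ^ l = p k 0 := by
    have heq : (fun l : ℕ => p k l * (0 : ℝ) ^ l) = fun l : ℕ => if l = 0 then p k 0 else 0 := by
      funext l
      cases l with
      | zero => simp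
      | succ n => simp [zero_pow]
    rw [heq, (hasSum_ite_eq 0 (p k 0)).tsum_eq]
  rw [← hval, hT, hfiter k hk, ← Real.exp_nat_mul]
  ring_nf
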